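/- arXiv:1309.4648 — 3 statements merged into one kernel-verified Lean document; each statement's English description precedes it below -/
import Mathlib

section
/- For all real numbers $\lambda > 0$, $t > 0$ and all $\kappa \in [0,1]$ it holds that $\left| \int_0^t \left( e^{-\lambda u} - e^{-\lambda t/2} \right) du \right| \le t\,(t\lambda)^{\kappa}$. -/
lemma exp_neg_lip (a b : ℝ) (ha : 0 ≤ a) (hab : a ≤ b) :
    |Real.exp (-a) - Real.exp (-b)| ≤ b - a := by
  have h1 : Real.exp (-a) ≤ 1 := Real.exp_le_one_iff.mpr (by linarith)
  have h2 : Real.exp (a - b) ≤ 1 := Real.exp_le_one_iff.mpr (by linarith)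
  have h3 : (a - b) + 1 ≤ Real.exp (a - b) := Real.add_one_le_exp _
  have h4 : Real.exp (-b) = Real.exp (-a) * Real.exp (a - b) := by
    rw [← Real.exp_add]; ring_nf
  have h5 : 0 < Real.exp (-a) := Real.exp_pos _
  have h6 : 0 < Real.exp (-b) := Real.exp_pos _
  rw [abs_sub_le_iff]
  constructor <;> nlinarith

theorem stmt_3 (lam t κ : ℝ) (hlam : 0 < lam) (ht : 0 < t)
    (hκ0 : 0 ≤ κ) (hκ1 : κ ≤ 1) :
    |∫ u in (0:ℝ)..t, (Real.exp (-(lam * u)) - Real.exp (-(lam * t / 2)))| ≤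
      t * (t * lam) ^ κ := by
  set C : ℝ := min 1 (t * lam) with hC
  have hbound : |∫ u in (0:ℝ)..t,
      (Real.exp (-(lam * u)) - Real.exp (-(lam * t / 2)))| ≤ C * |t - 0| := by
    rw [← Real.norm_eq_abs]
    apply intervalIntegral.norm_integral_le_of_norm_le_const
    intro u hu
    rw [Set.uIoc_of_le ht.le] at hu
    obtain ⟨hu0, hut⟩ := hu
    apply le_min
    · have e1 : Real.exp (-(lam * u)) ≤ 1 := Real.exp_le_one_iff.mpr (by nlinarith)
      have e2 : Real.exp (-(lam * t / 2)) ≤ 1 := Real.exp_le_one_iff.mpr (by nlinarith)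
      have e3 := Real.exp_pos (-(lam * u))
      have e4 := Real.exp_pos (-(lam * t / 2))
      rw [Real.norm_eq_abs, abs_sub_le_iff]
      constructor <;> linarith
    · rw [Real.norm_eq_abs]
      have h2 : (-(lam * t / 2) : ℝ) = -(lam * t / 2) := rfl
      rcases le_total (lam * u) (lam * t / 2) with h | h
      · have := exp_neg_lip (lam * u) (lam * t / 2) (by nlinarith) h
        calc |Real.exp (-(lam * u)) - Real.exp (-(lam * t / 2))| ≤ lam * t / 2 - lam * u := this
          _ ≤ t * lam := by nlinarith
      · have := exp_neg_lip (lam * t / 2) (lam * u) (by nlinarith) h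
        rw [abs_sub_comm]
        calc |Real.exp (-(lam * t / 2)) - Real.exp (-(lam * u))| ≤ lam * u - lam * t / 2 := this
          _ ≤ t * lam := by nlinarith
  have htl : 0 < t * lam := mul_pos ht hlam
  have hCle : C ≤ (t * lam) ^ κ := by
    rcases le_total (t * lam) 1 with h | h
    · have : (t * lam) ^ (1:ℝ) ≤ (t * lam) ^ κ :=
        Real.rpow_le_rpow_of_exponent_ge htl h hκ1
      rw [Real.rpow_one] at this
      exact le_trans (min_le_right _ _) this
    · exact le_trans (min_le_left _ _) (Real.one_le_rpow h hκ0)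
  calc |∫ u in (0:ℝ)..t, (Real.exp (-(lam * u)) - Real.exp (-(lam * t / 2)))|
      ≤ C * |t - 0| := hbound
    _ = C * t := by rw [sub_zero, abs_of_pos ht]
    _ ≤ (t * lam) ^ κ * t := by
        apply mul_le_mul_of_nonneg_right hCle ht.le
    _ = t * (t * lam) ^ κ := by ring
end

section
/- For all real numbers $\lambda > 0$, $t > 0$, all $s \in [0,t]$ and all $\kappa \in [0,2]$ it holds that $\left| e^{-\lambda s} - e^{-\lambda t/2}\left(1 - (s - t/2)\lambda\right) \right| \le 2\,(t\lambda)^{\kappa}$. -/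
set_option maxHeartbeats 1000000


theorem stmt_4 (lam t s κ : ℝ) (hlam : 0 < lam) (ht : 0 < t)
    (hs0 : 0 ≤ s) (hst : s ≤ t) (hκ0 : 0 ≤ κ) (hκ2 : κ ≤ 2) :
    |Real.exp (-(lam * s)) - Real.exp (-(lam * t / 2)) * (1 - (s - t / 2) * lam)| ≤
      2 * (t * lam) ^ κ := by
  set u : ℝ := lam * (t / 2 - s) with hu
  have hexp : Real.exp (-(lam * s)) = Real.exp (-(lam * t / 2)) * Real.exp u := by
    rw [← Real.exp_add, hu]; congr 1; ring
  have h1 : 1 - (s - t / 2) * lam = 1 + u := by rw [hu]; ring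
  have hE : Real.exp (-(lam * s)) - Real.exp (-(lam * t / 2)) * (1 - (s - t / 2) * lam)
      = Real.exp (-(lam * t / 2)) * (Real.exp u - 1 - u) := by
    rw [hexp, h1]; ring
  have hepos : (0:ℝ) < Real.exp (-(lam * t / 2)) := Real.exp_pos _
  have hele : Real.exp (-(lam * t / 2)) ≤ 1 := by
    apply Real.exp_le_one_iff.mpr; nlinarith
  have htl : 0 < t * lam := mul_pos ht hlam
  have habsu : |u| ≤ t * lam / 2 := by
    rw [abs_le]; constructor <;> nlinarith
  rcases le_or_gt (t * lam) 1 with hcase | hcase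
  · -- small case
    have hu1 : |u| ≤ 1 := by nlinarith
    have hb := Real.abs_exp_sub_one_sub_id_le hu1
    have hu2 : u ^ 2 ≤ (t * lam) ^ 2 / 4 := by
      have := sq_abs u
      nlinarith [abs_nonneg u]
    have hpow : ((t * lam) : ℝ) ^ (2:ℝ) ≤ (t * lam) ^ κ :=
      Real.rpow_le_rpow_of_exponent_ge htl hcase hκ2
    have hpow2 : ((t * lam) : ℝ) ^ (2:ℝ) = (t * lam) ^ 2 := by
      rw [Real.rpow_two]
    rw [hpow2] at hpow
    have hκpos : 0 < (t * lam) ^ κ := Real.rpow_pos_of_pos htl κ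
    rw [hE, abs_mul, abs_of_pos hepos]
    calc Real.exp (-(lam * t / 2)) * |Real.exp u - 1 - u|
        ≤ 1 * (u ^ 2) := by
          apply mul_le_mul hele hb (abs_nonneg _) zero_le_one
      _ ≤ (t * lam) ^ 2 / 4 := by nlinarith
      _ ≤ 2 * (t * lam) ^ κ := by linarith
  · -- large case
    have hpow : (1:ℝ) ≤ (t * lam) ^ κ := Real.one_le_rpow hcase.le hκ0
    have hA : Real.exp (-(lam * s)) ≤ 1 := by
      apply Real.exp_le_one_iff.mpr; nlinarith
    have hApos : 0 < Real.exp (-(lam * s)) := Real.exp_pos _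
    have haexp : lam * t / 2 + 1 ≤ Real.exp (lam * t / 2) := Real.add_one_le_exp _
    have hee : Real.exp (-(lam * t / 2)) * Real.exp (lam * t / 2) = 1 := by
      rw [← Real.exp_add]; simp
    have hB1 : Real.exp (-(lam * t / 2)) * (1 + u) ≤ 1 := by
      have h1u : 1 + u ≤ Real.exp (lam * t / 2) := by rw [hu]; nlinarith
      calc Real.exp (-(lam * t / 2)) * (1 + u)
          ≤ Real.exp (-(lam * t / 2)) * Real.exp (lam * t / 2) := by nlinarith
        _ = 1 := hee
    have hB2 : -1 ≤ Real.exp (-(lam * t / 2)) * (1 + u) := by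
      have h1u : -Real.exp (lam * t / 2) ≤ 1 + u := by rw [hu]; nlinarith
      calc (-1 : ℝ) = Real.exp (-(lam * t / 2)) * (-Real.exp (lam * t / 2)) := by
            rw [mul_neg, hee]
        _ ≤ Real.exp (-(lam * t / 2)) * (1 + u) := by nlinarith
    rw [abs_le]
    constructor
    · rw [hexp, h1]
      have : Real.exp (-(lam * t / 2)) * Real.exp u = Real.exp (-(lam * s)) := hexp.symm
      rw [this]
      linarith
    · rw [hexp, h1]
      have : Real.exp (-(lam * t / 2)) * Real.exp u = Real.exp (-(lam * s)) := hexp.symm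
      rw [this]
      linarith
end

section
/- Let $b \ge 0$, $\theta \in [0,1)$, $c \ge 0$ be real numbers, let $M \ge 1$ be a natural number, and let $a_0, \dots, a_M \ge 0$ satisfy $a_m \le b + c\,M^{-(1-\theta)} \sum_{l=0}^{m-1} (m-l)^{-\theta} a_l$ for all $m \in \{0, \dots, M\}$. Then there exists a constant $C$ depending only on $c$ and $\theta$ (and not on $M$, $b$, or the sequence $(a_m)$) such that $a_m \le C\,b$ for all $m \in \{0, \dots, M\}$. -/
open Real Finset

lemma aux_bern {p : ℝ} (hp0 : 0 < p) (hp1 : p ≤ 1) {x : ℝ} (hx : 1 ≤ x) :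
    (x - 1) ^ p + p * x ^ (p - 1) ≤ x ^ p := by
  have hx0 : 0 < x := lt_of_lt_of_le one_pos hx
  have hs : (-1 : ℝ) ≤ -(1/x) := by
    rw [neg_le_neg_iff]
    exact div_le_one_of_le₀ hx (le_of_lt hx0)
  have hB := rpow_one_add_le_one_add_mul_self hs (le_of_lt hp0) hp1
  have h1 : (1 + -(1/x)) = (x - 1) / x := by field_simp; ring
  rw [h1] at hB
  have hxp : (0:ℝ) ≤ x ^ p := Real.rpow_nonneg (le_of_lt hx0) p
  have := mul_le_mul_of_nonneg_right hB hxp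
  have hdiv : ((x - 1) / x) ^ p * x ^ p = (x - 1) ^ p := by
    rw [Real.div_rpow (by linarith) (le_of_lt hx0)]
    field_simp [ne_of_gt (Real.rpow_pos_of_pos hx0 p)]
  have hrhs : (1 + p * -(1/x)) * x ^ p = x ^ p - p * x ^ (p-1) := by
    rw [Real.rpow_sub hx0, Real.rpow_one]
    field_simp
    ring
  rw [hdiv, hrhs] at this
  linarith

lemma aux_sum {θ : ℝ} (hθ0 : 0 ≤ θ) (hθ1 : θ < 1) (k : ℕ) :
    ∑ j ∈ Finset.range k, ((j : ℝ) + 1) ^ (-θ) ≤ (k : ℝ) ^ (1 - θ) / (1 - θ) := by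
  have hp0 : (0:ℝ) < 1 - θ := by linarith
  induction k with
  | zero => simp [Real.zero_rpow (ne_of_gt hp0)]
  | succ k ih =>
    rw [Finset.sum_range_succ]
    have hb := aux_bern hp0 (by linarith) (x := (k:ℝ) + 1)
      (by push_cast; linarith [Nat.cast_nonneg (α := ℝ) k])
    have h1 : ((k:ℝ) + 1 - 1) = (k:ℝ) := by ring
    have h2 : (1 - θ - 1) = -θ := by ring
    rw [h1, h2] at hb
    have : ((k:ℝ) + 1) ^ (-θ) ≤ (((k:ℝ)+1) ^ (1-θ) - (k:ℝ) ^ (1-θ)) / (1-θ) := by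
      rw [le_div_iff₀ hp0]; nlinarith
    rw [sub_div] at this
    push_cast
    linarith

set_option maxHeartbeats 1000000 in
theorem stmt_19 (θ c : ℝ) (hθ0 : 0 ≤ θ) (hθ1 : θ < 1) (hc : 0 ≤ c) :
    ∃ C : ℝ, ∀ (b : ℝ), 0 ≤ b → ∀ (M : ℕ), 1 ≤ M → ∀ a : ℕ → ℝ,
      (∀ m ≤ M, 0 ≤ a m) →
      (∀ m ≤ M, a m ≤ b + c * (M : ℝ) ^ (-(1 - θ)) *
        ∑ l ∈ Finset.range m, ((m : ℝ) - l) ^ (-θ) * a l) →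
      ∀ m ≤ M, a m ≤ C * b := by
  rcases eq_or_lt_of_le hc with hc0 | hcpos
  · -- c = 0
    refine ⟨1, fun b hb M hM a ha h m hm => ?_⟩
    have := h m hm
    rw [← hc0] at this
    simpa using this
  -- c > 0
  have hp0 : (0:ℝ) < 1 - θ := by linarith
  have hp1 : (1:ℝ) - θ ≤ 1 := by linarith
  set ε : ℝ := ((1 - θ) / (2*c)) ^ (1/(1 - θ)) / 2 with hε
  have hεpos : 0 < ε := by
    apply div_pos _ two_pos
    exact Real.rpow_pos_of_pos (div_pos hp0 (by linarith)) _
  set K : ℝ := c * ε ^ (-θ) with hK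
  have hKpos : 0 < K := mul_pos hcpos (Real.rpow_pos_of_pos hεpos _)
  set N : ℕ := ⌈1/ε⌉₊ with hN
  have h2ε : (2*ε) ^ (1 - θ) = (1 - θ) / (2*c) := by
    have : (2:ℝ)*ε = ((1 - θ) / (2*c)) ^ (1/(1 - θ)) := by rw [hε]; ring
    rw [this, ← Real.rpow_mul (le_of_lt (div_pos hp0 (by linarith))), one_div,
      inv_mul_cancel₀ (ne_of_gt hp0), Real.rpow_one]
  refine ⟨max ((1+c)^N) (2 * Real.exp (2*K)), fun b hb M hM a ha h => ?_⟩
  have hM0 : (0:ℝ) < M := by exact_mod_cast Nat.lt_of_lt_of_le Nat.zero_lt_one hM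
  by_cases hMN : M ≤ N
  · -- crude case
    have crude : ∀ m, m ≤ M → a m ≤ (1+c)^m * b := by
      intro m
      induction m using Nat.strong_induction_on with
      | _ m ih =>
        intro hm
        have hMp : (M:ℝ) ^ (-(1-θ)) ≤ 1 :=
          Real.rpow_le_one_of_one_le_of_nonpos (by exact_mod_cast hM) (by linarith)
        have hsum : ∑ l ∈ Finset.range m, ((m : ℝ) - l) ^ (-θ) * a l
            ≤ ∑ l ∈ Finset.range m, (1+c)^l * b := by
          apply Finset.sum_le_sum
          intro l hl
          have hlm : l < m := Finset.mem_range.mp hl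
          have hker : ((m : ℝ) - l) ^ (-θ) ≤ 1 := by
            apply Real.rpow_le_one_of_one_le_of_nonpos _ (by linarith)
            have : (l:ℝ) + 1 ≤ m := by exact_mod_cast hlm
            linarith
          have hal : 0 ≤ a l := ha l (le_trans (le_of_lt hlm) hm)
          calc ((m : ℝ) - l) ^ (-θ) * a l ≤ 1 * a l :=
                mul_le_mul_of_nonneg_right hker hal
            _ = a l := one_mul _
            _ ≤ (1+c)^l * b := ih l hlm (le_trans (le_of_lt hlm) hm)
        have hsum0 : 0 ≤ ∑ l ∈ Finset.range m, ((m : ℝ) - l) ^ (-θ) * a l := by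
          apply Finset.sum_nonneg
          intro l hl
          have hlm : l < m := Finset.mem_range.mp hl
          exact mul_nonneg (Real.rpow_nonneg (by
            have : (l:ℝ) + 1 ≤ m := by exact_mod_cast hlm
            linarith) _) (ha l (le_trans (le_of_lt hlm) hm))
        have hgeom : (∑ l ∈ Finset.range m, (1+c)^l) * c = (1+c)^m - 1 := by
          have := geom_sum_mul (1+c) m
          simpa using this
        have step1 : a m ≤ b + c * ∑ l ∈ Finset.range m, (1+c)^l * b := by
          have h1 := h m hm
          have h2 : c * (M : ℝ) ^ (-(1 - θ)) *
              ∑ l ∈ Finset.range m, ((m : ℝ) - l) ^ (-θ) * a l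
              ≤ c * ∑ l ∈ Finset.range m, (1+c)^l * b := by
            calc c * (M : ℝ) ^ (-(1 - θ)) * ∑ l ∈ Finset.range m, ((m : ℝ) - l) ^ (-θ) * a l
                ≤ c * 1 * ∑ l ∈ Finset.range m, ((m : ℝ) - l) ^ (-θ) * a l := by
                  apply mul_le_mul_of_nonneg_right _ hsum0
                  exact mul_le_mul_of_nonneg_left hMp hc
              _ = c * ∑ l ∈ Finset.range m, ((m : ℝ) - l) ^ (-θ) * a l := by ring
              _ ≤ c * ∑ l ∈ Finset.range m, (1+c)^l * b :=
                  mul_le_mul_of_nonneg_left hsum hc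
          linarith
        have : c * ∑ l ∈ Finset.range m, (1+c)^l * b = ((1+c)^m - 1) * b := by
          rw [← Finset.sum_mul, ← hgeom]; ring
        rw [this] at step1
        nlinarith
    intro m hm
    calc a m ≤ (1+c)^m * b := crude m hm
      _ ≤ (1+c)^N * b := by
          apply mul_le_mul_of_nonneg_right _ hb
          exact pow_le_pow_right₀ (by linarith) (le_trans hm hMN)
      _ ≤ max ((1+c)^N) (2 * Real.exp (2*K)) * b :=
          mul_le_mul_of_nonneg_right (le_max_left _ _) hb
  · -- main case : N < M
    push_neg at hMN
    have hεM : 1 < ε * M := by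
      have h1 : (1:ℝ)/ε ≤ N := Nat.le_ceil _
      have h2 : (N:ℝ) + 1 ≤ M := by exact_mod_cast hMN
      have : (1:ℝ)/ε < M := by linarith
      rw [div_lt_iff₀ hεpos] at this
      linarith [mul_comm ε (M:ℝ)]
    have hεM0 : 0 < ε * M := lt_trans one_pos hεM
    set k : ℕ := ⌈ε * (M:ℝ)⌉₊ with hk
    have hk1 : ε * M ≤ k := Nat.le_ceil _
    have hk2 : (k:ℝ) < 2*ε*M := by
      have := Nat.ceil_lt_add_one (le_of_lt hεM0)
      rw [← hk] at this
      linarith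
    set A : ℕ → ℝ := fun m => (Finset.range (m+1)).sup' Finset.nonempty_range_add_one a with hA
    have haA : ∀ l m, l ≤ m → a l ≤ A m := fun l m hlm =>
      Finset.le_sup' a (Finset.mem_range.mpr (Nat.lt_succ_of_le hlm))
    have hAle : ∀ (m : ℕ) (x : ℝ), (∀ j ≤ m, a j ≤ x) → A m ≤ x := fun m x hx =>
      Finset.sup'_le _ _ (fun j hj => hx j (Nat.lt_succ_iff.mp (Finset.mem_range.mp hj)))
    have hA0 : ∀ m ≤ M, 0 ≤ A m := fun m hm =>
      le_trans (ha 0 (le_trans (Nat.zero_le m) hm)) (haA 0 m (Nat.zero_le m))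
    have hAmono : ∀ j m, j ≤ m → A j ≤ A m := fun j m hjm =>
      hAle j (A m) (fun i hi => haA i m (le_trans hi hjm))
    have hSA0 : ∀ m ≤ M, (0:ℝ) ≤ ∑ l ∈ Finset.range m, A l := by
      intro m hm
      apply Finset.sum_nonneg
      intro l hl
      exact hA0 l (le_trans (le_of_lt (Finset.mem_range.mp hl)) hm)
    set R : ℝ := ∑ j ∈ Finset.range k, ((j:ℝ) + 1) ^ (-θ) with hR
    have hRnn : ∀ j:ℕ, (0:ℝ) ≤ ((j:ℝ)+1)^(-θ) := fun j =>
      Real.rpow_nonneg (by positivity) _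
    have hMnn : (0:ℝ) ≤ (M:ℝ)^(-(1-θ)) := Real.rpow_nonneg (le_of_lt hM0) _
    have hcoef1 : c * (M:ℝ)^(-(1-θ)) * ((k:ℝ)^(1-θ)/(1-θ)) ≤ 1/2 := by
      have e1 : (k:ℝ)^(1-θ) ≤ (2*ε)^(1-θ) * (M:ℝ)^(1-θ) := by
        rw [← Real.mul_rpow (by linarith) (le_of_lt hM0)]
        exact Real.rpow_le_rpow (Nat.cast_nonneg k) (by linarith) (le_of_lt hp0)
      have eM : (M:ℝ)^(-(1-θ)) * (M:ℝ)^(1-θ) = 1 := by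
        rw [← Real.rpow_add hM0]
        norm_num
      have e2 : c * (M:ℝ)^(-(1-θ)) * ((k:ℝ)^(1-θ)/(1-θ))
          ≤ c * (M:ℝ)^(-(1-θ)) * ((2*ε)^(1-θ) * (M:ℝ)^(1-θ)/(1-θ)) := by
        gcongr
      have hcne : c ≠ 0 := ne_of_gt hcpos
      have hpne : (1:ℝ) - θ ≠ 0 := ne_of_gt hp0
      have e3 : c * (M:ℝ)^(-(1-θ)) * ((2*ε)^(1-θ) * (M:ℝ)^(1-θ)/(1-θ)) = 1/2 := by
        rw [h2ε]
        have e4 : c * (M:ℝ)^(-(1-θ)) * ((1-θ)/(2*c) * (M:ℝ)^(1-θ)/(1-θ))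
            = (c * ((1-θ)/(2*c)) / (1-θ)) * ((M:ℝ)^(-(1-θ)) * (M:ℝ)^(1-θ)) := by
          ring
        rw [e4, eM, mul_one]
        field_simp
      linarith
    have hcoef2 : c * (M:ℝ)^(-(1-θ)) * (ε*(M:ℝ))^(-θ) = K / M := by
      rw [Real.mul_rpow (le_of_lt hεpos) (le_of_lt hM0), hK]
      have eM2 : (M:ℝ)^(-(1-θ)) * (M:ℝ)^(-θ) = ((M:ℝ))⁻¹ := by
        rw [← Real.rpow_add hM0]
        have e : -(1-θ) + -θ = -1 := by ring
        rw [e, Real.rpow_neg_one]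
      have e5 : c * (M:ℝ)^(-(1-θ)) * (ε^(-θ) * (M:ℝ)^(-θ))
          = (c * ε^(-θ)) * ((M:ℝ)^(-(1-θ)) * (M:ℝ)^(-θ)) := by ring
      rw [e5, eM2]
      ring
    have key : ∀ m ≤ M, a m ≤ b + (1/2) * A m
        + (K/M) * ∑ l ∈ Finset.range m, A l := by
      intro m hm
      have hreflect : ∑ l ∈ Finset.range m, ((m : ℝ) - l) ^ (-θ) * a l
          = ∑ j ∈ Finset.range m, ((j:ℝ) + 1) ^ (-θ) * a (m - 1 - j) := by
        rw [← Finset.sum_range_reflect (fun j => ((j:ℝ) + 1) ^ (-θ) * a (m - 1 - j)) m]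
        apply Finset.sum_congr rfl
        intro l hl
        have hlm : l < m := Finset.mem_range.mp hl
        have h1 : m - 1 - (m - 1 - l) = l := by omega
        have h2 : ((m - 1 - l : ℕ):ℝ) + 1 = (m:ℝ) - l := by
          have e : (m - 1 - l : ℕ) = m - (l+1) := by omega
          rw [e, Nat.cast_sub (by omega)]
          push_cast
          ring
        rw [h1, h2]
      have hT : ∑ j ∈ Finset.range m, ((j:ℝ) + 1) ^ (-θ) * a (m - 1 - j)
          ≤ R * A m + (ε*(M:ℝ))^(-θ) * ∑ l ∈ Finset.range m, A l := by
        have hpt : ∀ n:ℕ, n ≤ m → ∑ j ∈ Finset.range n, ((j:ℝ) + 1) ^ (-θ) * a (m - 1 - j)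
            ≤ (∑ j ∈ Finset.range n, ((j:ℝ) + 1) ^ (-θ)) * A m := by
          intro n hn
          rw [Finset.sum_mul]
          apply Finset.sum_le_sum
          intro j hj
          exact mul_le_mul_of_nonneg_left (haA (m-1-j) m (by omega)) (hRnn j)
        rcases le_or_gt m k with hmk | hkm
        · have h1 := hpt m le_rfl
          have h2 : (∑ j ∈ Finset.range m, ((j:ℝ) + 1) ^ (-θ)) ≤ R := by
            rw [hR]
            apply Finset.sum_le_sum_of_subset_of_nonneg (Finset.range_subset_range.mpr hmk)
            intro j _ _
            exact hRnn j
          have h3 : (0:ℝ) ≤ (ε*(M:ℝ))^(-θ) * ∑ l ∈ Finset.range m, A l :=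
            mul_nonneg (Real.rpow_nonneg (le_of_lt hεM0) _) (hSA0 m hm)
          have h4 : (∑ j ∈ Finset.range m, ((j:ℝ) + 1) ^ (-θ)) * A m ≤ R * A m :=
            mul_le_mul_of_nonneg_right h2 (hA0 m hm)
          linarith
        · have hsplit : ∑ j ∈ Finset.range m, ((j:ℝ) + 1) ^ (-θ) * a (m - 1 - j)
              = (∑ j ∈ Finset.range k, ((j:ℝ) + 1) ^ (-θ) * a (m - 1 - j))
              + ∑ j ∈ Finset.Ico k m, ((j:ℝ) + 1) ^ (-θ) * a (m - 1 - j) := by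
            rw [Finset.range_eq_Ico,
              ← Finset.sum_Ico_consecutive _ (Nat.zero_le k) (le_of_lt hkm), ← Finset.range_eq_Ico]
          have hpart1 : ∑ j ∈ Finset.range k, ((j:ℝ) + 1) ^ (-θ) * a (m - 1 - j)
              ≤ R * A m := hpt k (le_of_lt hkm)
          have hpart2 : ∑ j ∈ Finset.Ico k m, ((j:ℝ) + 1) ^ (-θ) * a (m - 1 - j)
              ≤ (ε*(M:ℝ))^(-θ) * ∑ l ∈ Finset.range m, A l := by
            have s1 : ∑ j ∈ Finset.Ico k m, ((j:ℝ) + 1) ^ (-θ) * a (m - 1 - j)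
                ≤ ∑ j ∈ Finset.Ico k m, (ε*(M:ℝ))^(-θ) * A (m - 1 - j) := by
              apply Finset.sum_le_sum
              intro j hj
              have hjk : k ≤ j := (Finset.mem_Ico.mp hj).1
              have hker : ((j:ℝ) + 1) ^ (-θ) ≤ (ε*(M:ℝ))^(-θ) := by
                apply Real.rpow_le_rpow_of_nonpos hεM0 _ (neg_nonpos.mpr hθ0)
                have : (k:ℝ) ≤ j := Nat.cast_le.mpr hjk
                linarith
              apply mul_le_mul hker (haA (m-1-j) (m-1-j) le_rfl)
                (ha (m-1-j) (by omega)) (Real.rpow_nonneg (le_of_lt hεM0) _)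
            have s2 : ∑ j ∈ Finset.Ico k m, (ε*(M:ℝ))^(-θ) * A (m - 1 - j)
                ≤ ∑ j ∈ Finset.range m, (ε*(M:ℝ))^(-θ) * A (m - 1 - j) := by
              apply Finset.sum_le_sum_of_subset_of_nonneg
              · rw [Finset.range_eq_Ico]
                exact Finset.Ico_subset_Ico (Nat.zero_le k) le_rfl
              · intro j hj _
                exact mul_nonneg (Real.rpow_nonneg (le_of_lt hεM0) _)
                  (hA0 (m-1-j) (by have := Finset.mem_range.mp hj; omega))
            have s3 : ∑ j ∈ Finset.range m, (ε*(M:ℝ))^(-θ) * A (m - 1 - j)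
                = (ε*(M:ℝ))^(-θ) * ∑ l ∈ Finset.range m, A l := by
              rw [← Finset.mul_sum]
              congr 1
              exact Finset.sum_range_reflect (fun l => A l) m
            linarith
          linarith [hsplit]
      have hstep := h m hm
      rw [hreflect] at hstep
      have hcM : 0 ≤ c * (M:ℝ)^(-(1-θ)) := mul_nonneg hc hMnn
      have hcomb : c * (M:ℝ)^(-(1-θ))
            * ∑ j ∈ Finset.range m, ((j:ℝ) + 1) ^ (-θ) * a (m - 1 - j)
          ≤ (c * (M:ℝ)^(-(1-θ)) * R) * A m
            + (c * (M:ℝ)^(-(1-θ)) * (ε*(M:ℝ))^(-θ)) * ∑ l ∈ Finset.range m, A l := by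
        have hmm := mul_le_mul_of_nonneg_left hT hcM
        nlinarith [hmm]
      have hR2 : R ≤ (k:ℝ)^(1-θ)/(1-θ) := aux_sum hθ0 hθ1 k
      have hh : (c * (M:ℝ)^(-(1-θ)) * R) * A m ≤ (1/2) * A m := by
        apply mul_le_mul_of_nonneg_right _ (hA0 m hm)
        calc c * (M:ℝ)^(-(1-θ)) * R ≤ c * (M:ℝ)^(-(1-θ)) * ((k:ℝ)^(1-θ)/(1-θ)) :=
              mul_le_mul_of_nonneg_left hR2 hcM
          _ ≤ 1/2 := hcoef1
      rw [hcoef2] at hcomb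
      linarith
    have key2 : ∀ m ≤ M, A m ≤ 2*b + (2*K/M) * ∑ l ∈ Finset.range m, A l := by
      intro m hm
      have hAm : A m ≤ b + (1/2) * A m + (K/M) * ∑ l ∈ Finset.range m, A l := by
        apply hAle
        intro j hj
        have h1 := key j (le_trans hj hm)
        have h2 : A j ≤ A m := hAmono j m hj
        have h3 : ∑ l ∈ Finset.range j, A l ≤ ∑ l ∈ Finset.range m, A l := by
          apply Finset.sum_le_sum_of_subset_of_nonneg (Finset.range_subset_range.mpr hj)
          intro l hl _
          exact hA0 l (le_trans (le_of_lt (Finset.mem_range.mp hl)) hm)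
        have hKM : (0:ℝ) ≤ K/M := le_of_lt (div_pos hKpos hM0)
        nlinarith [mul_le_mul_of_nonneg_left h3 hKM]
      have h4 : (2*K/(M:ℝ)) * ∑ l ∈ Finset.range m, A l
          = 2 * ((K/(M:ℝ)) * ∑ l ∈ Finset.range m, A l) := by ring
      linarith [h4]
    have key3 : ∀ m, m ≤ M → A m ≤ 2*b*(1 + 2*K/M)^m := by
      intro m
      induction m using Nat.strong_induction_on with
      | _ m ih =>
        intro hm
        have hkey2 := key2 m hm
        have ht0 : (0:ℝ) ≤ 2*K/M := by positivity
        have hsum : ∑ l ∈ Finset.range m, A l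
            ≤ ∑ l ∈ Finset.range m, 2*b*(1 + 2*K/M)^l := by
          apply Finset.sum_le_sum
          intro l hl
          exact ih l (Finset.mem_range.mp hl)
            (le_trans (le_of_lt (Finset.mem_range.mp hl)) hm)
        have hgeom : (∑ l ∈ Finset.range m, (1 + 2*K/M)^l) * (2*K/M)
            = (1 + 2*K/M)^m - 1 := by
          have hg := geom_sum_mul (1 + 2*K/M) m
          rw [add_sub_cancel_left] at hg
          exact hg
        have hpull : ∑ l ∈ Finset.range m, 2*b*(1 + 2*K/M)^l
            = 2*b * ∑ l ∈ Finset.range m, (1 + 2*K/M)^l := by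
          rw [Finset.mul_sum]
        have hmul := mul_le_mul_of_nonneg_left hsum ht0
        nlinarith [hmul, hgeom, hb]
    intro m hm
    have h1 : a m ≤ 2*b*(1 + 2*K/M)^m := le_trans (haA m m le_rfl) (key3 m hm)
    have ht0 : (0:ℝ) ≤ 2*K/M := by positivity
    have h2 : (1 + 2*K/M)^m ≤ (1 + 2*K/M)^M :=
      pow_le_pow_right₀ (by linarith) hm
    have h3 : (1 + 2*K/M)^M ≤ (Real.exp (2*K/M))^M := by
      apply pow_le_pow_left₀ (by linarith)
      linarith [Real.add_one_le_exp (2*K/M)]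
    have h4 : (Real.exp (2*K/M))^M = Real.exp (2*K) := by
      rw [← Real.exp_nat_mul]
      congr 1
      field_simp
    have h5 : a m ≤ 2 * Real.exp (2*K) * b := by
      calc a m ≤ 2*b*(1 + 2*K/M)^m := h1
        _ ≤ 2*b*Real.exp (2*K) := by
            rw [← h4]
            have hle := le_trans h2 h3
            nlinarith
        _ = 2 * Real.exp (2*K) * b := by ring
    calc a m ≤ 2 * Real.exp (2*K) * b := h5
      _ ≤ max ((1+c)^N) (2 * Real.exp (2*K)) * b :=
          mul_le_mul_of_nonneg_right (le_max_right _ _) hb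
end
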